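/- arXiv:2511.08290 — 6 statements merged into one kernel-verified Lean document; each statement's English description precedes it below -/
import Mathlib

section
/- If char F ≠ 2, then sol(sl₂(F)) = {0}, i.e., for every nonzero x in sl₂(F) there exists y such that the subalgebra generated by x and y is not solvable. -/
/-- The solvabilizer of `x` in `L`: elements `y` such that the Lie subalgebra
generated by `x` and `y` is solvable. -/
def solvabilizer (R : Type*) {L : Type*} [CommRing R] [LieRing L] [LieAlgebra R L]
    (x : L) : Set L :=
  {y | LieAlgebra.IsSolvable (LieSubalgebra.lieSpan R L {x, y})}

/-- The solvabilizer of `L`: elements `x` such that for every `h ∈ L` the Lie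
subalgebra generated by `h` and `x` is solvable. -/
def solSet (R L : Type*) [CommRing R] [LieRing L] [LieAlgebra R L] : Set L :=
  {x | ∀ h : L, LieAlgebra.IsSolvable (LieSubalgebra.lieSpan R L {h, x})}


open LieAlgebra.SpecialLinear Matrix

section SL2
variable (F : Type*) [Field F]

local notation "L2" => sl (Fin 2) F

private def msl (m : Matrix (Fin 2) (Fin 2) F) (h : m 0 0 + m 1 1 = 0) : L2 :=
  ⟨m, show _ ∈ LinearMap.ker (traceLinearMap (Fin 2) F F) by
    rw [LinearMap.mem_ker]; show Matrix.trace m = 0; rw [Matrix.trace_fin_two]; exact h⟩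

def Esl : L2 := msl F !![0,1;0,0] (by norm_num)
def Fsl : L2 := msl F !![0,0;1,0] (by norm_num)
def Hsl : L2 := msl F !![1,0;0,-1] (by norm_num)

@[simp] lemma Esl_val : (Esl F).val = !![0,1;0,0] := rfl
@[simp] lemma Fsl_val : (Fsl F).val = !![0,0;1,0] := rfl
@[simp] lemma Hsl_val : (Hsl F).val = !![1,0;0,-1] := rfl

variable {F}

@[simp] lemma sl_coe_smul (c : F) (x : L2) : (↑(c • x) : Matrix (Fin 2) (Fin 2) F) = c • (x : Matrix (Fin 2) (Fin 2) F) := rfl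
@[simp] lemma sl_coe_add (x y : L2) : (↑(x + y) : Matrix (Fin 2) (Fin 2) F) = (x : Matrix (Fin 2) (Fin 2) F) + y := rfl
@[simp] lemma sl_coe_sub (x y : L2) : (↑(x - y) : Matrix (Fin 2) (Fin 2) F) = (x : Matrix (Fin 2) (Fin 2) F) - y := rfl

lemma sl_trace_entry (z : L2) : z.val 1 1 = - z.val 0 0 := by
  have h : Matrix.trace (z.val) = 0 := z.2
  rw [Matrix.trace_fin_two] at h
  linear_combination h

lemma sl_ext {z w : L2} (h00 : z.val 0 0 = w.val 0 0) (h01 : z.val 0 1 = w.val 0 1)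
    (h10 : z.val 1 0 = w.val 1 0) : z = w := by
  apply Subtype.ext
  ext i j
  fin_cases i <;> fin_cases j <;>
    simp only [Fin.isValue] <;>
    first
      | exact h00 | exact h01 | exact h10
      | rw [show ((⟨1,by norm_num⟩ : Fin 2)) = (1:Fin 2) from rfl, sl_trace_entry,
            sl_trace_entry, h00]

lemma bEF : ⁅Esl F, Fsl F⁆ = Hsl F := by
  apply sl_ext <;> rw [sl_bracket] <;>
    simp [Matrix.mul_apply, Fin.sum_univ_two]

lemma bHE : ⁅Hsl F, Esl F⁆ = (2:F) • Esl F := by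
  apply sl_ext <;> rw [sl_bracket] <;>
    simp [Matrix.mul_apply, Fin.sum_univ_two] <;> ring

lemma bHF : ⁅Hsl F, Fsl F⁆ = (-2:F) • Fsl F := by
  apply sl_ext <;> rw [sl_bracket] <;>
    simp [Matrix.mul_apply, Fin.sum_univ_two] <;> ring

lemma sl_decomp (z : L2) :
    z = z.val 0 0 • Hsl F + z.val 0 1 • Esl F + z.val 1 0 • Fsl F := by
  apply sl_ext <;> simp

variable (F) in
lemma Esl_ne_zero : (Esl F) ≠ 0 := by
  intro h
  have := congrArg (fun z : L2 => z.val 0 1) h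
  simpa using this

instance : Nontrivial L2 := ⟨Esl F, 0, Esl_ne_zero F⟩

/-- A Lie subalgebra of sl2 containing E, F, H is everything. -/
lemma eq_top_of_basis_mem {K : LieSubalgebra F L2} (hE : Esl F ∈ K) (hF : Fsl F ∈ K)
    (hH : Hsl F ∈ K) : K = ⊤ := by
  rw [eq_top_iff]
  intro z _
  rw [sl_decomp z]
  exact K.add_mem (K.add_mem (K.smul_mem _ hH) (K.smul_mem _ hE)) (K.smul_mem _ hF)

lemma sl2_not_solvable (hchar : ringChar F ≠ 2) : ¬ LieAlgebra.IsSolvable L2 := by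
  have h2 : (2 : F) ≠ 0 := Ring.two_ne_zero hchar
  intro hs
  have hlt := LieAlgebra.derivedSeries_lt_top_of_solvable F L2
  have htop : LieAlgebra.derivedSeries F L2 1 = ⊤ := by
    rw [eq_top_iff]
    intro z _
    have hd : LieAlgebra.derivedSeries F L2 1 = ⁅(⊤ : LieIdeal F L2), (⊤ : LieIdeal F L2)⁆ := by
      rw [LieAlgebra.derivedSeries_def, LieAlgebra.derivedSeriesOfIdeal_succ,
        LieAlgebra.derivedSeriesOfIdeal_zero]
    rw [hd]
    have hH : Hsl F ∈ ⁅(⊤ : LieIdeal F L2), (⊤ : LieIdeal F L2)⁆ := by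
      rw [← bEF]; exact LieSubmodule.lie_mem_lie trivial trivial
    have hE : Esl F ∈ ⁅(⊤ : LieIdeal F L2), (⊤ : LieIdeal F L2)⁆ := by
      have : Esl F = (2 : F)⁻¹ • ⁅Hsl F, Esl F⁆ := by
        rw [bHE, smul_smul, inv_mul_cancel₀ h2, one_smul]
      rw [this]
      exact Submodule.smul_mem _ _ (LieSubmodule.lie_mem_lie trivial trivial)
    have hF : Fsl F ∈ ⁅(⊤ : LieIdeal F L2), (⊤ : LieIdeal F L2)⁆ := by
      have : Fsl F = (-2 : F)⁻¹ • ⁅Hsl F, Fsl F⁆ := by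
        rw [bHF, smul_smul, inv_mul_cancel₀ (by simpa using h2), one_smul]
      rw [this]
      exact Submodule.smul_mem _ _ (LieSubmodule.lie_mem_lie trivial trivial)
    rw [sl_decomp z]
    exact Submodule.add_mem _ (Submodule.add_mem _ (Submodule.smul_mem _ _ hH)
      (Submodule.smul_mem _ _ hE)) (Submodule.smul_mem _ _ hF)
  rw [htop] at hlt
  exact lt_irrefl _ hlt

lemma span_case_a {x : L2} (ha : x.val 0 1 ≠ 0) :
    LieSubalgebra.lieSpan F L2 {Fsl F, x} = ⊤ := by
  set K := LieSubalgebra.lieSpan F L2 {Fsl F, x} with hK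
  have hFm : Fsl F ∈ K := LieSubalgebra.subset_lieSpan (Set.mem_insert _ _)
  have hxm : x ∈ K := LieSubalgebra.subset_lieSpan (Set.mem_insert_of_mem _ rfl)
  have hb : ⁅Fsl F, x⁆ ∈ K := K.lie_mem hFm hxm
  have idb : ⁅Fsl F, x⁆ = (2 * x.val 0 0) • Fsl F - (x.val 0 1) • Hsl F := by
    apply sl_ext <;> rw [sl_bracket] <;>
      simp [Matrix.mul_apply, Matrix.vecMul, dotProduct, Fin.sum_univ_two, sl_trace_entry] <;> ring
  have hHm : Hsl F ∈ K := by
    have hid : Hsl F = (x.val 0 1)⁻¹ • ((2 * x.val 0 0) • Fsl F - ⁅Fsl F, x⁆) := by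
      rw [idb]
      apply sl_ext <;> simp <;> field_simp <;> try ring
    rw [hid]; exact K.smul_mem _ (K.sub_mem (K.smul_mem _ hFm) hb)
  have hEm : Esl F ∈ K := by
    have hid : Esl F = (x.val 0 1)⁻¹ • (x - x.val 0 0 • Hsl F - x.val 1 0 • Fsl F) := by
      apply sl_ext <;> simp [sl_trace_entry] <;> field_simp <;> try ring
    rw [hid]
    exact K.smul_mem _ (K.sub_mem (K.sub_mem hxm (K.smul_mem _ hHm)) (K.smul_mem _ hFm))
  exact eq_top_of_basis_mem hEm hFm hHm

lemma span_case_c {x : L2} (hc : x.val 1 0 ≠ 0) :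
    LieSubalgebra.lieSpan F L2 {Esl F, x} = ⊤ := by
  set K := LieSubalgebra.lieSpan F L2 {Esl F, x} with hK
  have hEm : Esl F ∈ K := LieSubalgebra.subset_lieSpan (Set.mem_insert _ _)
  have hxm : x ∈ K := LieSubalgebra.subset_lieSpan (Set.mem_insert_of_mem _ rfl)
  have hb : ⁅Esl F, x⁆ ∈ K := K.lie_mem hEm hxm
  have idb : ⁅Esl F, x⁆ = (x.val 1 0) • Hsl F - (2 * x.val 0 0) • Esl F := by
    apply sl_ext <;> rw [sl_bracket] <;>
      simp [Matrix.mul_apply, Matrix.vecMul, dotProduct, Fin.sum_univ_two, sl_trace_entry] <;> ring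
  have hHm : Hsl F ∈ K := by
    have hid : Hsl F = (x.val 1 0)⁻¹ • (⁅Esl F, x⁆ + (2 * x.val 0 0) • Esl F) := by
      rw [idb]
      apply sl_ext <;> simp <;> field_simp <;> try ring
    rw [hid]; exact K.smul_mem _ (K.add_mem hb (K.smul_mem _ hEm))
  have hFm : Fsl F ∈ K := by
    have hid : Fsl F = (x.val 1 0)⁻¹ • (x - x.val 0 0 • Hsl F - x.val 0 1 • Esl F) := by
      apply sl_ext <;> simp [sl_trace_entry] <;> field_simp <;> try ring
    rw [hid]
    exact K.smul_mem _ (K.sub_mem (K.sub_mem hxm (K.smul_mem _ hHm)) (K.smul_mem _ hEm))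
  exact eq_top_of_basis_mem hEm hFm hHm

lemma span_case_b {x : L2} (h2 : (2:F) ≠ 0) (ha : x.val 0 1 = 0) (hc : x.val 1 0 = 0)
    (hp : x.val 0 0 ≠ 0) :
    LieSubalgebra.lieSpan F L2 {Esl F + Fsl F, x} = ⊤ := by
  set K := LieSubalgebra.lieSpan F L2 {Esl F + Fsl F, x} with hK
  have hsm : Esl F + Fsl F ∈ K := LieSubalgebra.subset_lieSpan (Set.mem_insert _ _)
  have hxm : x ∈ K := LieSubalgebra.subset_lieSpan (Set.mem_insert_of_mem _ rfl)
  have hb : ⁅x, Esl F + Fsl F⁆ ∈ K := K.lie_mem hxm hsm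
  have idb : ⁅x, Esl F + Fsl F⁆ = (2 * x.val 0 0) • Esl F - (2 * x.val 0 0) • Fsl F := by
    apply sl_ext <;> rw [sl_bracket] <;>
      simp [Matrix.mul_apply, Matrix.vecMul, dotProduct, Fin.sum_univ_two, sl_trace_entry, ha, hc] <;> ring
  have hEm : Esl F ∈ K := by
    have hid : Esl F = (2:F)⁻¹ • ((Esl F + Fsl F) + (2 * x.val 0 0)⁻¹ • ⁅x, Esl F + Fsl F⁆) := by
      rw [idb]
      apply sl_ext <;> simp <;> field_simp <;> try ring
    rw [hid]
    exact K.smul_mem _ (K.add_mem hsm (K.smul_mem _ hb))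
  have hFm : Fsl F ∈ K := by
    have hid : Fsl F = (Esl F + Fsl F) - Esl F := by abel
    rw [hid]; exact K.sub_mem hsm hEm
  have hHm : Hsl F ∈ K := by
    have hid : Hsl F = (x.val 0 0)⁻¹ • x := by
      apply sl_ext <;> simp [ha, hc, sl_trace_entry] <;> field_simp <;> try ring
    rw [hid]; exact K.smul_mem _ hxm
  exact eq_top_of_basis_mem hEm hFm hHm

end SL2


theorem stmt3 (F : Type*) [Field F] (hchar : ringChar F ≠ 2) :
    solSet F (LieAlgebra.SpecialLinear.sl (Fin 2) F) = {0} := by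
  have h2 : (2:F) ≠ 0 := Ring.two_ne_zero hchar
  ext x
  simp only [solSet, Set.mem_setOf_eq, Set.mem_singleton_iff]
  constructor
  · intro hx
    by_contra hx0
    have key : ∃ h, LieSubalgebra.lieSpan F (LieAlgebra.SpecialLinear.sl (Fin 2) F) {h, x} = ⊤ := by
      by_cases ha : x.val 0 1 ≠ 0
      · exact ⟨Fsl F, span_case_a ha⟩
      by_cases hc : x.val 1 0 ≠ 0
      · exact ⟨Esl F, span_case_c hc⟩
      push_neg at ha hc
      have hp : x.val 0 0 ≠ 0 := by
        intro hp0
        exact hx0 (by apply sl_ext <;> simp [ha, hc, hp0])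
      exact ⟨Esl F + Fsl F, span_case_b h2 ha hc hp⟩
    obtain ⟨h, hsp⟩ := key
    have hs := hx h
    rw [hsp] at hs
    exact sl2_not_solvable hchar
      ((LieAlgebra.solvable_iff_equiv_solvable LieSubalgebra.topEquiv).mp hs)
  · rintro rfl h
    set Kh : LieSubalgebra F (LieAlgebra.SpecialLinear.sl (Fin 2) F) :=
      { Submodule.span F {h} with
        lie_mem' := by
          intro u v hu hv
          replace hu : u ∈ Submodule.span F {h} := hu
          replace hv : v ∈ Submodule.span F {h} := hv
          rw [Submodule.mem_span_singleton] at hu hv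
          obtain ⟨s, rfl⟩ := hu
          obtain ⟨t, rfl⟩ := hv
          show ⁅s • h, t • h⁆ ∈ Submodule.span F {h}
          rw [smul_lie, lie_smul, lie_self, smul_zero, smul_zero]
          exact Submodule.zero_mem _ } with hKh
    have hle : LieSubalgebra.lieSpan F _ {h, 0} ≤ Kh := by
      rw [LieSubalgebra.lieSpan_le]
      rintro y (rfl | hy)
      · exact Submodule.mem_span_singleton_self _
      · rw [Set.mem_singleton_iff] at hy
        subst hy
        exact Kh.zero_mem
    haveI : IsLieAbelian Kh := by
      constructor
      intro u v
      have hu : u.val ∈ Submodule.span F {h} := u.2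
      have hv : v.val ∈ Submodule.span F {h} := v.2
      rw [Submodule.mem_span_singleton] at hu hv
      obtain ⟨s, hs⟩ := hu
      obtain ⟨t, ht⟩ := hv
      apply Subtype.ext
      show ⁅u.val, v.val⁆ = 0
      rw [← hs, ← ht, smul_lie, lie_smul, lie_self, smul_zero, smul_zero]
    haveI : LieAlgebra.IsSolvable Kh := inferInstance
    exact (LieSubalgebra.inclusion_injective hle).lieAlgebra_isSolvable
end

section
/- Let F be a field of characteristic 2 and L the 3-dimensional Lie algebra with basis a, b, c satisfying [a,b]=b, [a,c]=c, [b,c]=a. Then L is simple. -/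
theorem stmt5 (F L : Type*) [Field F] [CharP F 2] [LieRing L] [LieAlgebra F L]
    (B : Module.Basis (Fin 3) F L)
    (hab : ⁅B 0, B 1⁆ = B 1) (hac : ⁅B 0, B 2⁆ = B 2) (hbc : ⁅B 1, B 2⁆ = B 0) :
    LieAlgebra.IsSimple F L := by
  have h2 : (2 : F) = 0 := CharP.cast_eq_zero F 2
  have hneg : ∀ y : L, -y = y := by
    intro y
    have hy : y + y = 0 := by rw [← two_smul F y, h2, zero_smul]
    exact neg_eq_of_add_eq_zero_left hy
  have hba : ⁅B 1, B 0⁆ = B 1 := by rw [← lie_skew, hab, hneg]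
  have hca : ⁅B 2, B 0⁆ = B 2 := by rw [← lie_skew, hac, hneg]
  have hcb : ⁅B 2, B 1⁆ = B 0 := by rw [← lie_skew, hbc, hneg]
  constructor
  · intro I
    rcases eq_or_ne I ⊥ with h | h
    · exact Or.inl h
    · right
      obtain ⟨x, hxI, hx0⟩ : ∃ x ∈ I, x ≠ 0 := by
        by_contra hc
        push_neg at hc
        exact h (by rw [eq_bot_iff]; intro m hm; exact hc m hm)
      set α := B.repr x 0 with hα
      set β := B.repr x 1 with hβ
      set γ := B.repr x 2 with hγ
      have hx : x = α • B 0 + β • B 1 + γ • B 2 := by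
        conv_lhs => rw [← B.sum_repr x]
        rw [Fin.sum_univ_three]
      -- key: B 0 ∈ I
      have ha : B 0 ∈ I := by
        have hax : ⁅B 0, x⁆ = β • B 1 + γ • B 2 := by
          rw [hx]; simp [hab, hac]
        have haxI : ⁅B 0, x⁆ ∈ I := I.lie_mem hxI
        rcases eq_or_ne γ 0 with hγ0 | hγ0
        · rcases eq_or_ne β 0 with hβ0 | hβ0
          · have hα0 : α ≠ 0 := by
              intro hα0
              apply hx0
              rw [hx, hα0, hβ0, hγ0]; simp
            have : (α⁻¹ : F) • x = B 0 := by
              rw [hx, hβ0, hγ0]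
              simp [smul_smul, inv_mul_cancel₀ hα0]
            rw [← this]
            exact I.smul_mem _ hxI
          · have hcx : ⁅B 2, ⁅B 0, x⁆⁆ = β • B 0 := by
              rw [hax]; simp [hcb]
            have : (β⁻¹ : F) • ⁅B 2, ⁅B 0, x⁆⁆ = B 0 := by
              rw [hcx, smul_smul, inv_mul_cancel₀ hβ0, one_smul]
            rw [← this]
            exact I.smul_mem _ (I.lie_mem haxI)
        · have hbx : ⁅B 1, ⁅B 0, x⁆⁆ = γ • B 0 := by
            rw [hax]; simp [hbc]
          have : (γ⁻¹ : F) • ⁅B 1, ⁅B 0, x⁆⁆ = B 0 := by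
            rw [hbx, smul_smul, inv_mul_cancel₀ hγ0, one_smul]
          rw [← this]
          exact I.smul_mem _ (I.lie_mem haxI)
      have hb : B 1 ∈ I := by rw [← hba]; exact I.lie_mem ha
      have hc : B 2 ∈ I := by rw [← hca]; exact I.lie_mem ha
      rw [eq_top_iff]
      intro z _
      have hz : z = B.repr z 0 • B 0 + B.repr z 1 • B 1 + B.repr z 2 • B 2 := by
        conv_lhs => rw [← B.sum_repr z]
        rw [Fin.sum_univ_three]
      rw [hz]
      exact add_mem (add_mem (I.smul_mem _ ha) (I.smul_mem _ hb)) (I.smul_mem _ hc)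
  · intro habs
    exact B.ne_zero 1 (by rw [← hab, trivial_lie_zero])
end

section
/- Let F be a field of characteristic 2 and L the 3-dimensional Lie algebra with basis a, b, c satisfying [a,b]=b, [a,c]=c, [b,c]=a. Then a ∈ sol(L): for every x ∈ L, the subalgebra generated by a and x is solvable; however sol(L) is not an ideal of L (indeed b, c ∉ sol(L) since ⟨b,c⟩ = L is not solvable). -/
open LieAlgebra

lemma solvable_of_bracket4 {R L : Type*} [CommRing R] [LieRing L] [LieAlgebra R L]
    (H : ∀ a b c d : L, ⁅⁅a, b⁆, ⁅c, d⁆⁆ = 0) : LieAlgebra.IsSolvable L := by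
  set s : Set L := {m : L | ∃ a ∈ (⊤ : LieIdeal R L), ∃ b ∈ (⊤ : LieIdeal R L), ⁅a, b⁆ = m}
    with hs
  have hspan : ((derivedSeries R L 1 : LieIdeal R L) : Submodule R L) = Submodule.span R s := by
    rw [derivedSeries_def, derivedSeriesOfIdeal_succ, derivedSeriesOfIdeal_zero]
    exact LieSubmodule.lieIdeal_oper_eq_linear_span' ..
  have key1 : ∀ a b : L, ∀ y ∈ Submodule.span R s, ⁅⁅a, b⁆, y⁆ = 0 := by
    intro a b y hy
    refine Submodule.span_induction ?_ ?_ ?_ ?_ hy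
    · rintro m ⟨c, -, d, -, rfl⟩; exact H a b c d
    · exact lie_zero _
    · intro y z _ _ h1 h2; rw [lie_add, h1, h2, add_zero]
    · intro t y _ h1; rw [lie_smul, h1, smul_zero]
  have key2 : ∀ x ∈ Submodule.span R s, ∀ y ∈ Submodule.span R s, ⁅x, y⁆ = 0 := by
    intro x hx
    refine Submodule.span_induction ?_ ?_ ?_ ?_ hx
    · rintro m ⟨a, -, b, -, rfl⟩; exact key1 a b
    · intro y _; exact zero_lie _
    · intro y z _ _ h1 h2 w hw; rw [add_lie, h1 w hw, h2 w hw, add_zero]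
    · intro t y _ h1 w hw; rw [smul_lie, h1 w hw, smul_zero]
  refine (isSolvable_iff R L).mpr ⟨2, ?_⟩
  have h2 : derivedSeries R L 2 = ⁅derivedSeries R L 1, derivedSeries R L 1⁆ := by
    rw [derivedSeries_def, derivedSeriesOfIdeal_succ, ← derivedSeries_def]
  rw [h2, LieSubmodule.lie_eq_bot_iff]
  intro x hx m hm
  exact key2 x (hspan ▸ hx) m (hspan ▸ hm)

theorem stmt6 (F L : Type*) [Field F] [CharP F 2] [LieRing L] [LieAlgebra F L]
    (B : Module.Basis (Fin 3) F L)
    (hab : ⁅B 0, B 1⁆ = B 1) (hac : ⁅B 0, B 2⁆ = B 2) (hbc : ⁅B 1, B 2⁆ = B 0) :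
    B 0 ∈ solSet F L ∧ B 1 ∉ solSet F L ∧ B 2 ∉ solSet F L ∧
      ¬∃ I : LieIdeal F L, (I : Set L) = solSet F L := by
  have hnegL : ∀ y : L, -y = y := by
    intro y
    have hm1 : (-1 : F) = 1 := by
      have h2 : (2 : F) = 0 := CharP.cast_eq_zero F 2
      linear_combination -h2
    rw [← neg_one_smul F y, hm1, one_smul]
  -- key bracket formula
  have keyb : ∀ x : L, ∃ r : F, ⁅B 0, x⁆ = x - r • B 0 := by
    intro x
    have hx := B.sum_repr x
    rw [Fin.sum_univ_three] at hx
    obtain ⟨r0, r1, r2, hx⟩ : ∃ r0 r1 r2 : F, r0 • B 0 + r1 • B 1 + r2 • B 2 = x :=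
      ⟨_, _, _, hx⟩
    refine ⟨r0, ?_⟩
    rw [← hx]
    simp only [lie_add, lie_smul, lie_self, smul_zero, hab, hac, zero_add]
    abel
  -- Part 1
  have part1 : B 0 ∈ solSet F L := by
    intro h
    set w : L := ⁅B 0, h⁆ with hw
    have hwmem : w ∈ Submodule.span F {B 0, h} := by
      obtain ⟨r, hr⟩ := keyb h
      rw [hw, hr]
      exact Submodule.sub_mem _ (Submodule.subset_span (by simp))
        (Submodule.smul_mem _ _ (Submodule.subset_span (by simp)))
    have hbr : ∀ u ∈ Submodule.span F {B 0, h}, ∀ v ∈ Submodule.span F {B 0, h},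
        ∃ t : F, ⁅u, v⁆ = t • w := by
      intro u hu v hv
      rw [Submodule.mem_span_pair] at hu hv
      obtain ⟨a, b, rfl⟩ := hu; obtain ⟨c, d, rfl⟩ := hv
      refine ⟨a * d - b * c, ?_⟩
      have hskew : ⁅h, B 0⁆ = -w := by rw [hw, ← lie_skew]
      simp only [lie_add, add_lie, lie_smul, smul_lie, lie_self, smul_zero, hskew, ← hw,
        smul_neg, zero_add, add_zero, smul_smul]
      module
    let S : LieSubalgebra F L :=
      { Submodule.span F {B 0, h} with
        lie_mem' := fun {u v} hu hv => by
          obtain ⟨t, ht⟩ := hbr u hu v hv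
          exact ht ▸ Submodule.smul_mem _ _ hwmem }
    have hSmem : ∀ y : L, y ∈ S ↔ y ∈ Submodule.span F {B 0, h} := fun y => Iff.rfl
    have hEq : LieSubalgebra.lieSpan F L {h, B 0} = S := by
      apply le_antisymm
      · rw [LieSubalgebra.lieSpan_le]
        intro y hy
        rcases hy with rfl | rfl
        · exact (hSmem _).mpr (Submodule.subset_span (by simp))
        · exact (hSmem _).mpr (Submodule.subset_span (by simp))
      · intro y hy
        rw [hSmem] at hy
        refine Submodule.span_le.mpr ?_ hy
        intro z hz
        rcases hz with rfl | rfl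
        · exact LieSubalgebra.subset_lieSpan (by simp)
        · exact LieSubalgebra.subset_lieSpan (by simp)
    rw [hEq]
    apply solvable_of_bracket4 (R := F)
    rintro ⟨a, ha⟩ ⟨b, hb⟩ ⟨c, hc⟩ ⟨d, hd⟩
    apply Subtype.ext
    obtain ⟨s, hs⟩ := hbr a ha b hb
    obtain ⟨t, ht⟩ := hbr c hc d hd
    show ⁅⁅a, b⁆, ⁅c, d⁆⁆ = (0 : L)
    rw [hs, ht]
    simp [lie_smul, smul_lie]
  -- L is not solvable
  have hnontriv : Nontrivial L := ⟨B 0, 0, B.ne_zero 0⟩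
  have notsolL : ¬ LieAlgebra.IsSolvable L := by
    intro hsol
    have hlt := derivedSeries_lt_top_of_solvable (R := F) (L := L)
    have hD1 : derivedSeries F L 1 = ⁅(⊤ : LieIdeal F L), (⊤ : LieIdeal F L)⁆ := by
      rw [derivedSeries_def, derivedSeriesOfIdeal_succ, derivedSeriesOfIdeal_zero]
    have hB : ∀ i, B i ∈ derivedSeries F L 1 := by
      intro i
      rw [hD1]
      fin_cases i
      · exact hbc ▸ LieSubmodule.lie_mem_lie trivial trivial
      · exact hab ▸ LieSubmodule.lie_mem_lie trivial trivial
      · exact hac ▸ LieSubmodule.lie_mem_lie trivial trivial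
    have htop : derivedSeries F L 1 = ⊤ := by
      rw [eq_top_iff]
      intro y _
      have hy : y ∈ Submodule.span F (Set.range B) := by rw [B.span_eq]; trivial
      have hle : Submodule.span F (Set.range B) ≤ (derivedSeries F L 1 : Submodule F L) :=
        Submodule.span_le.mpr (by rintro _ ⟨i, rfl⟩; exact hB i)
      exact hle hy
    rw [htop] at hlt
    exact lt_irrefl _ hlt
  -- span of {B 1, B 2}-type pairs is everything
  have topspan : ∀ u v : L, ⁅u, v⁆ = B 0 → ({u, v} : Set L) = {B 1, B 2} →
      LieSubalgebra.lieSpan F L {u, v} = ⊤ := by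
    intro u v huv hset
    rw [eq_top_iff]
    intro y _
    have h1 : B 1 ∈ LieSubalgebra.lieSpan F L {u, v} :=
      LieSubalgebra.subset_lieSpan (by rw [hset]; simp)
    have h2 : B 2 ∈ LieSubalgebra.lieSpan F L {u, v} :=
      LieSubalgebra.subset_lieSpan (by rw [hset]; simp)
    have hu : u ∈ LieSubalgebra.lieSpan F L {u, v} :=
      LieSubalgebra.subset_lieSpan (by simp)
    have hv : v ∈ LieSubalgebra.lieSpan F L {u, v} :=
      LieSubalgebra.subset_lieSpan (by simp)
    have h0 : B 0 ∈ LieSubalgebra.lieSpan F L {u, v} :=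
      huv ▸ LieSubalgebra.lie_mem _ hu hv
    have hB : ∀ i, B i ∈ LieSubalgebra.lieSpan F L {u, v} := by
      intro i; fin_cases i <;> assumption
    have hy : y ∈ Submodule.span F (Set.range B) := by rw [B.span_eq]; trivial
    have hle : Submodule.span F (Set.range B)
        ≤ (LieSubalgebra.lieSpan F L {u, v} : Submodule F L) :=
      Submodule.span_le.mpr (by rintro _ ⟨i, rfl⟩; exact hB i)
    exact hle hy
  have nottop : ∀ u v : L, ⁅u, v⁆ = B 0 → ({u, v} : Set L) = {B 1, B 2} →
      ¬ LieAlgebra.IsSolvable (LieSubalgebra.lieSpan F L {u, v}) := by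
    intro u v huv hset hsol
    rw [topspan u v huv hset] at hsol
    exact notsolL ((solvable_iff_equiv_solvable LieSubalgebra.topEquiv).mp hsol)
  have part2 : B 1 ∉ solSet F L := by
    intro hmem
    exact nottop (B 2) (B 1)
      (by rw [← lie_skew, hbc, hnegL]) (Set.pair_comm _ _) (hmem (B 2))
  have part3 : B 2 ∉ solSet F L := by
    intro hmem
    exact nottop (B 1) (B 2) hbc rfl (hmem (B 1))
  refine ⟨part1, part2, part3, ?_⟩
  rintro ⟨I, hI⟩
  have hB0 : B 0 ∈ I := by rw [← SetLike.mem_coe, hI]; exact part1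
  have hB1 : B 1 ∈ I := by
    have h := I.lie_mem (x := B 1) hB0
    rwa [← lie_skew, hab, hnegL] at h
  apply part2
  rw [← SetLike.mem_coe, hI] at hB1
  exact hB1
end

section
/- Let B₁,...,Bₙ be subspaces of a vector space V over a field F such that no Bᵢ is contained in the union of the other Bⱼ. If |F| > n−1, then the union B₁ ∪ ... ∪ Bₙ is not a subspace of V. -/
theorem stmt7 (F V : Type*) [Field F] [AddCommGroup V] [Module F V] (n : ℕ) (hn : 2 ≤ n)
    (B : Fin n → Submodule F V)
    (hB : ∀ i, ¬ ((B i : Set V) ⊆ ⋃ j ∈ {j : Fin n | j ≠ i}, (B j : Set V)))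
    (hF : ((n - 1 : ℕ) : Cardinal) < Cardinal.mk F) :
    ¬∃ W : Submodule F V, (W : Set V) = ⋃ i, (B i : Set V) := by
  rintro ⟨W, hW⟩
  set i0 : Fin n := ⟨0, by omega⟩ with hi0
  set i1 : Fin n := ⟨1, by omega⟩ with hi1
  have hne : i1 ≠ i0 := by simp [hi0, hi1]
  obtain ⟨x, hx0, hx⟩ := Set.not_subset.mp (hB i0)
  obtain ⟨y, hy1, hy⟩ := Set.not_subset.mp (hB i1)
  simp only [Set.mem_iUnion, Set.mem_setOf_eq, not_exists, SetLike.mem_coe] at hx hy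
  -- push_neg not needed
  have hxW : x ∈ W := by
    rw [← SetLike.mem_coe, hW]; exact Set.mem_iUnion.mpr ⟨i0, hx0⟩
  have hyW : y ∈ W := by
    rw [← SetLike.mem_coe, hW]; exact Set.mem_iUnion.mpr ⟨i1, hy1⟩
  have hy1' : y ∈ B i1 := hy1
  have key : ∀ c : F, ∃ i : Fin n, i ≠ i1 ∧ x + c • y ∈ B i := by
    intro c
    have hmem : x + c • y ∈ W := W.add_mem hxW (W.smul_mem c hyW)
    rw [← SetLike.mem_coe, hW, Set.mem_iUnion] at hmem
    obtain ⟨i, hi⟩ := hmem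
    refine ⟨i, ?_, hi⟩
    rintro rfl
    have hxB : x ∈ B i1 := by
      have h := (B i1).sub_mem (SetLike.mem_coe.mp hi) ((B i1).smul_mem c hy1')
      simpa using h
    exact hx i1 hne hxB
  choose f hf1 hf2 using key
  have finj : Function.Injective f := by
    intro c c' hcc
    by_contra hne'
    have h1 := hf2 c
    have h2 := hf2 c'
    rw [hcc] at h1
    have h3 := (B (f c')).sub_mem h1 h2
    have h4 : (c - c') • y ∈ B (f c') := by
      have : (x + c • y) - (x + c' • y) = (c - c') • y := by
        rw [sub_smul]; abel
      rwa [this] at h3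
    have h5 := (B (f c')).smul_mem (c - c')⁻¹ h4
    rw [smul_smul, inv_mul_cancel₀ (sub_ne_zero.mpr hne'), one_smul] at h5
    exact hy (f c') (hf1 c') h5
  haveI : Fintype F := Fintype.ofInjective
    (fun c => (⟨f c, hf1 c⟩ : {i : Fin n // i ≠ i1}))
    (fun a b h => finj (congrArg Subtype.val h))
  have hle : Fintype.card F ≤ Fintype.card {i : Fin n // i ≠ i1} :=
    Fintype.card_le_of_injective (fun c => (⟨f c, hf1 c⟩ : {i : Fin n // i ≠ i1}))
      (fun a b h => finj (congrArg Subtype.val h))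
  have hcard : Fintype.card {i : Fin n // i ≠ i1} = n - 1 := by
    have : Fintype.card {i : Fin n // ¬ (i = i1)} = n - 1 := by
      rw [Fintype.card_subtype_compl]
      simp
    simpa using this
  rw [hcard] at hle
  rw [Cardinal.mk_fintype, Nat.cast_lt] at hF
  omega
end

section
/- For any x in a Lie algebra L, sol_L(x) equals the union of all maximal solvable subalgebras of L that contain x. -/
/-- A Lie subalgebra of a solvable Lie subalgebra is solvable. -/
lemma solvable_of_le {F L : Type*} [Field F] [LieRing L] [LieAlgebra F L]
    {K M : LieSubalgebra F L} (hKM : K ≤ M) (hM : LieAlgebra.IsSolvable M) :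
    LieAlgebra.IsSolvable K :=
  haveI := hM; (LieSubalgebra.inclusion_injective hKM).lieAlgebra_isSolvable

theorem stmt8 (F L : Type*) [Field F] [LieRing L] [LieAlgebra F L] [FiniteDimensional F L]
    (x : L) :
    solvabilizer F x =
      ⋃ M ∈ {M : LieSubalgebra F L |
        Maximal (fun N : LieSubalgebra F L => LieAlgebra.IsSolvable N) M ∧ x ∈ M},
        (M : Set L) := by
  ext y
  simp only [solvabilizer, Set.mem_setOf_eq, Set.mem_iUnion, SetLike.mem_coe, exists_prop]
  constructor
  · intro hsol
    set S := LieSubalgebra.lieSpan F L {x, y}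
    have hwf : WellFoundedGT (LieSubalgebra F L) := inferInstance
    obtain ⟨M, ⟨hMsol, hSM⟩, hmax⟩ := hwf.wf.has_min
      {N : LieSubalgebra F L | LieAlgebra.IsSolvable N ∧ S ≤ N} ⟨S, hsol, le_rfl⟩
    have hxM : x ∈ M := hSM (LieSubalgebra.subset_lieSpan (by simp))
    have hyM : y ∈ M := hSM (LieSubalgebra.subset_lieSpan (by simp))
    refine ⟨M, ⟨⟨hMsol, ?_⟩, hxM⟩, hyM⟩
    intro N hN hMN
    by_contra h
    exact hmax N ⟨hN, hSM.trans hMN⟩ (lt_of_le_of_ne hMN (fun e => h (e ▸ le_rfl)))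
  · rintro ⟨M, ⟨⟨hMsol, _⟩, hxM⟩, hyM⟩
    refine solvable_of_le ?_ hMsol
    rw [LieSubalgebra.lieSpan_le]
    rintro z (rfl | rfl) <;> simpa
end

section
/- Let L be a finite-dimensional Lie algebra and N an ideal with N ⊆ sol(L) such that N is solvable. Then for any x ∈ L, the preimage of sol_{L/N}(x+N) under the projection π: L → L/N is exactly sol_L(x); equivalently sol_{L/N}(π(x)) = π(sol_L(x)). -/
section Aux

variable {R L L' : Type*} [CommRing R] [LieRing L] [LieAlgebra R L]
  [LieRing L'] [LieAlgebra R L']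

/-- The quotient map as a Lie algebra homomorphism. -/
def lieQuotHom (I : LieIdeal R L) : L →ₗ⁅R⁆ L ⧸ I :=
  { (LieSubmodule.Quotient.mk' I).toLinearMap with
    map_lie' := rfl }

lemma lieQuotHom_apply (I : LieIdeal R L) (y : L) :
    lieQuotHom I y = LieSubmodule.Quotient.mk' I y := rfl

lemma lieQuotHom_surjective (I : LieIdeal R L) : Function.Surjective (lieQuotHom I) :=
  LieSubmodule.Quotient.surjective_mk' I

lemma lieQuotHom_ker (I : LieIdeal R L) : (lieQuotHom I).ker = I := by
  ext y
  rw [LieHom.mem_ker, lieQuotHom_apply, LieSubmodule.Quotient.mk_eq_zero]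

/-- Extension of solvable by solvable is solvable. -/
lemma isSolvable_of_ideal_quot (I : LieIdeal R L) (h1 : LieAlgebra.IsSolvable I)
    (h2 : LieAlgebra.IsSolvable (L ⧸ I)) : LieAlgebra.IsSolvable L := by
  obtain ⟨k, hk⟩ := (LieAlgebra.isSolvable_iff R _).mp h2
  obtain ⟨l, hl⟩ := (LieAlgebra.isSolvable_iff R _).mp h1
  rw [LieIdeal.derivedSeries_eq_bot_iff] at hl
  have hle : LieAlgebra.derivedSeries R L k ≤ I := by
    rw [← LieIdeal.derivedSeries_map_eq k (lieQuotHom_surjective I)] at hk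
    rw [← lieQuotHom_ker I]
    exact LieIdeal.map_eq_bot_iff.mp hk
  refine (LieAlgebra.isSolvable_iff R L).mpr ⟨l + k, ?_⟩
  rw [LieAlgebra.derivedSeries_def, LieAlgebra.derivedSeriesOfIdeal_add (k := l) (l := k), ←
    LieAlgebra.derivedSeries_def, ← le_bot_iff, ← hl]
  exact LieAlgebra.derivedSeriesOfIdeal_mono hle l

lemma map_lieSpan (f : L →ₗ⁅R⁆ L') (s : Set L) :
    (LieSubalgebra.lieSpan R L s).map f = LieSubalgebra.lieSpan R L' (f '' s) := by
  apply le_antisymm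
  · rw [LieSubalgebra.map_le_iff_le_comap, LieSubalgebra.lieSpan_le]
    intro z hz
    show f z ∈ LieSubalgebra.lieSpan R L' (f '' s)
    exact LieSubalgebra.subset_lieSpan (Set.mem_image_of_mem f hz)
  · rw [LieSubalgebra.lieSpan_le]
    rintro _ ⟨z, hz, rfl⟩
    exact ⟨z, LieSubalgebra.subset_lieSpan hz, rfl⟩

lemma range_comp_incl (f : L →ₗ⁅R⁆ L') (S : LieSubalgebra R L) :
    (f.comp S.incl).range = S.map f := by
  ext z
  simp only [LieHom.mem_range, LieSubalgebra.mem_map, LieHom.comp_apply, Subtype.exists]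
  constructor
  · rintro ⟨y, hy, rfl⟩; exact ⟨y, hy, rfl⟩
  · rintro ⟨y, hy, rfl⟩; exact ⟨y, hy, rfl⟩

lemma isSolvable_map_of_isSolvable (f : L →ₗ⁅R⁆ L') (S : LieSubalgebra R L)
    (h : LieAlgebra.IsSolvable S) : LieAlgebra.IsSolvable (S.map f) := by
  rw [← range_comp_incl]
  exact (f.comp S.incl).isSolvable_range

lemma isSolvable_of_map_quot (N : LieIdeal R L) (hN : LieAlgebra.IsSolvable N)
    (S : LieSubalgebra R L) (h : LieAlgebra.IsSolvable (S.map (lieQuotHom N))) :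
    LieAlgebra.IsSolvable S := by
  set g : S →ₗ⁅R⁆ L ⧸ N := (lieQuotHom N).comp S.incl with hg
  have hrange : LieAlgebra.IsSolvable g.range := by
    rw [hg, range_comp_incl]; exact h
  have hquot : LieAlgebra.IsSolvable (S ⧸ g.ker) :=
    (LieAlgebra.solvable_iff_equiv_solvable g.quotKerEquivRange).mpr hrange
  have hker : LieAlgebra.IsSolvable g.ker := by
    let j : g.ker →ₗ⁅R⁆ N :=
      { toFun := fun z => ⟨(z.1 : L), by
          have hz := LieHom.mem_ker.mp z.2
          exact (LieSubmodule.Quotient.mk_eq_zero N).mp hz⟩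
        map_add' := fun a b => rfl
        map_smul' := fun c a => rfl
        map_lie' := rfl }
    have hj : Function.Injective j := by
      intro a b hab
      have h2 := congrArg (fun z : N => (z : L)) hab
      exact Subtype.ext (Subtype.ext h2)
    exact hj.lieAlgebra_isSolvable (hL := hN)
  exact isSolvable_of_ideal_quot g.ker hker hquot

end Aux

theorem stmt11 (F L : Type*) [Field F] [LieRing L] [LieAlgebra F L] [FiniteDimensional F L]
    (N : LieIdeal F L) (hNsolv : LieAlgebra.IsSolvable N)
    (hNsub : (N : Set L) ⊆ solSet F L) (x : L) :
    (LieSubmodule.Quotient.mk' N) ⁻¹'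
        solvabilizer F ((LieSubmodule.Quotient.mk' N) x) = solvabilizer F x ∧
    solvabilizer F ((LieSubmodule.Quotient.mk' N) x) =
      (LieSubmodule.Quotient.mk' N) '' solvabilizer F x := by
  have key : (LieSubmodule.Quotient.mk' N) ⁻¹'
      solvabilizer F ((LieSubmodule.Quotient.mk' N) x) = solvabilizer F x := by
    ext y
    have himg : (lieQuotHom N) '' {x, y} =
        {LieSubmodule.Quotient.mk' N x, LieSubmodule.Quotient.mk' N y} := by
      rw [Set.image_pair]; rfl
    simp only [Set.mem_preimage, solvabilizer, Set.mem_setOf_eq]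
    rw [← himg, ← map_lieSpan (lieQuotHom N) {x, y}]
    constructor
    · intro h
      exact isSolvable_of_map_quot N hNsolv _ h
    · intro h
      exact isSolvable_map_of_isSolvable (lieQuotHom N) _ h
  refine ⟨key, ?_⟩
  rw [← key, Set.image_preimage_eq _ (LieSubmodule.Quotient.surjective_mk' N)]
end
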